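/- Let n₁ > n₂ ≥ 1 be natural numbers and n = n₁ + n₂. For all real p, q with -1/n < p < 0 and -1/n < q < 0 satisfying the constraint (n₁ - n₂)² = (1+np)(1+nq)/(pq), one has 1 + p + q ≥ (n₁ - 1)/n₁, with equality when p = q = -1/(2n₁). -/

import Mathlib

set_option maxHeartbeats 1000000 in
theorem stmt_9 (n₁ n₂ : ℕ) (h₂ : 1 ≤ n₂) (h₁ : n₂ < n₁) (n : ℕ) (hn : n = n₁ + n₂) :
    (∀ p q : ℝ, -1 / (n : ℝ) < p → p < 0 → -1 / (n : ℝ) < q → q < 0 →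
      ((n₁ : ℝ) - (n₂ : ℝ)) ^ 2 = (1 + (n : ℝ) * p) * (1 + (n : ℝ) * q) / (p * q) →
      1 + p + q ≥ ((n₁ : ℝ) - 1) / (n₁ : ℝ)) ∧
    (1 + (-1 / (2 * (n₁ : ℝ))) + (-1 / (2 * (n₁ : ℝ))) = ((n₁ : ℝ) - 1) / (n₁ : ℝ)) := by
  have hb : (1:ℝ) ≤ (n₂:ℝ) := by exact_mod_cast h₂
  have ha : (n₂:ℝ) < (n₁:ℝ) := by exact_mod_cast h₁
  have ha1 : (1:ℝ) ≤ (n₁:ℝ) := hb.trans ha.le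
  have hnr : (n:ℝ) = (n₁:ℝ) + (n₂:ℝ) := by exact_mod_cast hn
  have hnpos : (0:ℝ) < (n:ℝ) := by nlinarith
  constructor
  · intro p q hp1 hp0 hq1 hq0 hc
    have hpq : (0:ℝ) < p * q := mul_pos_of_neg_of_neg hp0 hq0
    have hpn : -p < 1 / (n:ℝ) := by
      have := hp1; rw [neg_div] at this; linarith
    have hqn : -q < 1 / (n:ℝ) := by
      have := hq1; rw [neg_div] at this; linarith
    have htn : p * q < 1 / (n:ℝ) ^ 2 := by
      have h := mul_lt_mul'' hpn hqn (by linarith) (by linarith)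
      have h' : (-p) * (-q) = p * q := by ring
      rw [h'] at h
      calc p * q < 1 / (n:ℝ) * (1 / (n:ℝ)) := h
        _ = 1 / (n:ℝ) ^ 2 := by ring
    -- key identity
    have hc' : ((n₁:ℝ) - n₂) ^ 2 * (p * q) = (1 + n * p) * (1 + n * q) := by
      rw [eq_div_iff hpq.ne'] at hc
      linarith [hc]
    rw [hnr] at hc' htn
    have hs : ((n₁:ℝ) + n₂) * (p + q) = -(1 + 4 * n₁ * n₂ * (p * q)) := by
      linear_combination -hc'
    have hkey2 : (((n₁:ℝ) + n₂) * (p + q)) ^ 2 = (1 + 4 * n₁ * n₂ * (p * q)) ^ 2 := by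
      rw [hs]; ring
    -- (4n₁² t - 1)(4n₂² t - 1) ≥ 0
    have hquad : (4 * (n₁:ℝ)^2 * (p*q) - 1) * (4 * (n₂:ℝ)^2 * (p*q) - 1) ≥ 0 := by
      nlinarith [hkey2, sq_nonneg (((n₁:ℝ) + n₂) * (p - q))]
    have hn2t : 4 * (n₂:ℝ)^2 * (p*q) - 1 < 0 := by
      have h' : ((n₁:ℝ) + n₂)^2 * (p*q) < 1 := by
        have h2 := mul_lt_mul_of_pos_left htn
          (show (0:ℝ) < ((n₁:ℝ)+n₂)^2 by positivity)
        rw [mul_one_div, div_self (by positivity)] at h2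
        linarith
      nlinarith [hpq]
    have ht : 4 * (n₁:ℝ)^2 * (p*q) ≤ 1 := by
      rcases mul_nonneg_iff.mp hquad with ⟨h', h''⟩ | ⟨h', h''⟩
      · linarith
      · linarith
    -- conclude
    have h4 : ((n₁:ℝ) + n₂) * ((n₁:ℝ) * (p + q) + 1) = (n₂:ℝ) * (1 - 4 * n₁^2 * (p*q)) := by
      linear_combination (n₁:ℝ) * hs
    have h5 : (n₂:ℝ) * (1 - 4 * n₁^2 * (p*q)) ≥ 0 :=
      mul_nonneg (by linarith) (by linarith)
    have hfin : (n₁:ℝ) * (p + q) + 1 ≥ 0 := by nlinarith [h4, h5]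
    rw [ge_iff_le, div_le_iff₀ (by linarith : (0:ℝ) < (n₁:ℝ))]
    nlinarith [hfin]
  · have h0 : (n₁:ℝ) ≠ 0 := by positivity
    field_simp
    ring
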